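/- Theorem 5 (exact exponential convergence rate of the posterior FNR): Assume conditions (C) and (A1), assume d^t ≠ (1,…,1), and assume that for each i with d_i^t = 0 there is a constant H̃_i > 0 such that (1/n)·log v_{in} → −H̃_i as n → ∞. Define FNR_n = (Σ_{i=1}^m (1 − d̂_{n,i}) v_{in}) / max(Σ_{i=1}^m (1 − d̂_{n,i}), 1), where d̂_n is the non-marginal decision, and let H̃_min = min{H̃_i : d_i^t = 0}. Then (1/n)·log FNR_n → −H̃_min as n → ∞. -/

import Mathlib

open Filter

/-- Theorem 5 (exact exponential convergence rate of the posterior FNR). -/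
theorem FNR_convergence_rate
    (m : ℕ) (hm : 1 ≤ m)
    (dt : Fin m → Bool)
    (G : Fin m → Finset (Fin m)) (hG : ∀ i, i ∈ G i)
    (w : ℕ → Fin m → (Fin m → Bool) → ℝ)
    (hw : ∀ n i d, w n i d ∈ Set.Ioo (0:ℝ) 1)
    (v : ℕ → Fin m → ℝ) (hv : ∀ n i, v n i ∈ Set.Ioo (0:ℝ) 1)
    (β : ℕ → ℝ) (hβ : ∀ n, β n ∈ Set.Ioo (0:ℝ) 1)
    (hA1₁ : 0 < Filter.liminf β Filter.atTop)
    (hA1₂ : Filter.limsup β Filter.atTop < 1)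
    (hC1 : ∀ (i : Fin m) (d : Fin m → Bool),
      (∀ j ∈ G i, d j = dt j) → Tendsto (fun n => w n i d) atTop (nhds 1))
    (hC0 : ∀ (i : Fin m) (d : Fin m → Bool),
      (¬ ∀ j ∈ G i, d j = dt j) → Tendsto (fun n => w n i d) atTop (nhds 0))
    (hdt : (Finset.univ.filter (fun i => dt i = false)).Nonempty)
    (Ht : Fin m → ℝ)
    (hHt : ∀ i, dt i = false → 0 < Ht i ∧
      Tendsto (fun n : ℕ => Real.log (v n i) / n) atTop (nhds (-(Ht i))))
    (dhat : ℕ → Fin m → Bool)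
    (hdhat : ∀ n (d : Fin m → Bool),
      (∑ i, if d i then w n i d - β n else 0) ≤
        (∑ i, if dhat n i then w n i (dhat n) - β n else 0)) :
    Tendsto (fun n : ℕ =>
        Real.log ((∑ i, if dhat n i then 0 else v n i) /
          max (∑ i, if dhat n i then 0 else (1:ℝ)) 1) / n) atTop
      (nhds (-((Finset.univ.filter (fun i => dt i = false)).inf' hdt Ht))) := by
  classical
  have hmR : (0:ℝ) < m := by exact_mod_cast hm
  -- constants from (A1)
  set δ1 : ℝ := Filter.liminf β Filter.atTop / 2 with hδ1def
  have hδ1pos : 0 < δ1 := half_pos hA1₁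
  have hbdd₁ : IsBoundedUnder (· ≥ ·) atTop β :=
    isBoundedUnder_of ⟨0, fun n => (hβ n).1.le⟩
  have hbdd₂ : IsBoundedUnder (· ≤ ·) atTop β :=
    isBoundedUnder_of ⟨1, fun n => (hβ n).2.le⟩
  have hβδ1 : ∀ᶠ n in atTop, δ1 < β n :=
    eventually_lt_of_lt_liminf (half_lt_self hA1₁) hbdd₁
  set c : ℝ := (Filter.limsup β Filter.atTop + 1) / 2 with hcdef
  have hc1 : c < 1 := by rw [hcdef]; linarith
  have hβc : ∀ᶠ n in atTop, β n < c :=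
    eventually_lt_of_limsup_lt (by rw [hcdef]; linarith) hbdd₂
  set δ : ℝ := min δ1 (1 - c) with hδdef
  have hδpos : 0 < δ := lt_min hδ1pos (by linarith)
  set ε : ℝ := δ / (2 * m) with hεdef
  have hεpos : 0 < ε := div_pos hδpos (by positivity)
  have hmε : (m:ℝ) * ε = δ / 2 := by
    rw [hεdef]; field_simp
  -- Part A: consistency of the non-marginal procedure
  have key : ∀ d : Fin m → Bool, d ≠ dt → ∀ᶠ n in atTop,
      (∑ i, if d i then w n i d - β n else 0) <
        (∑ i, if dt i then w n i dt - β n else 0) := by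
    intro d hd
    obtain ⟨j, hj⟩ := Function.ne_iff.mp hd
    have hE1 : ∀ᶠ n in atTop, ∀ i : Fin m, 1 - ε < w n i dt :=
      eventually_all.2 fun i =>
        ((hC1 i dt (fun _ _ => rfl)).eventually_const_lt (by linarith))
    have hE2 : ∀ᶠ n in atTop, ∀ i : Fin m, d i ≠ dt i → w n i d < ε :=
      eventually_all.2 fun i => by
        by_cases hne : d i = dt i
        · exact Eventually.of_forall fun n h => absurd hne h
        · have hnall : ¬ ∀ k ∈ G i, d k = dt k := fun h => hne (h i (hG i))
          exact ((hC0 i d hnall).eventually_lt_const hεpos).mono fun n h _ => h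
    filter_upwards [hE1, hE2, hβc, hβδ1] with n h1 h2 h3 h4
    have hlb : ∀ i : Fin m,
        (if d i then w n i d - β n else 0) + ((if i = j then δ else 0) - ε) ≤
          (if dt i then w n i dt - β n else 0) := by
      intro i
      obtain ⟨hwd0, hwd1⟩ := hw n i d
      obtain ⟨hwt0, hwt1⟩ := hw n i dt
      obtain ⟨hβ0, hβ1⟩ := hβ n
      have h1i := h1 i
      have hδδ1 : δ ≤ δ1 := min_le_left _ _
      have hδc : δ ≤ 1 - c := min_le_right _ _
      rcases eq_or_ne i j with rfl | hij
      · cases hdj : d i <;> cases htj : dt i <;>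
          simp only [hdj, htj] at hj ⊢ <;> simp at hj ⊢ <;>
          [skip; skip]
        · -- d i = false, dt i = true
          linarith
        · -- d i = true, dt i = false
          have := h2 i (by simp [hdj, htj])
          linarith
      · simp only [hij, if_neg hij]
        cases hdj : d i <;> cases htj : dt i <;> simp only [if_true, if_false] <;> simp
        · linarith
        · linarith
        · have := h2 i (by simp [hdj, htj])
          linarith
        · linarith
    have hsum : (∑ i, if d i then w n i d - β n else 0) + (δ - (m:ℝ) * ε) ≤
        ∑ i, if dt i then w n i dt - β n else 0 := by
      have h := Finset.sum_le_sum (fun i (_ : i ∈ Finset.univ) => hlb i)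
      calc (∑ i, if d i then w n i d - β n else 0) + (δ - (m:ℝ) * ε)
          = ∑ i : Fin m, ((if d i then w n i d - β n else 0) +
              ((if i = j then δ else 0) - ε)) := by
            rw [Finset.sum_add_distrib, Finset.sum_sub_distrib, Finset.sum_const,
              Finset.card_univ, Fintype.card_fin, Finset.sum_ite_eq' Finset.univ j
                (fun _ => δ)]
            simp [nsmul_eq_mul]
        _ ≤ _ := h
    have : 0 < δ - (m:ℝ) * ε := by rw [hmε]; linarith
    linarith
  have hall : ∀ᶠ n in atTop, ∀ d : Fin m → Bool, d ≠ dt →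
      (∑ i, if d i then w n i d - β n else 0) <
        (∑ i, if dt i then w n i dt - β n else 0) :=
    eventually_all.2 fun d => by
      by_cases hd : d = dt
      · exact Eventually.of_forall fun n h => absurd hd h
      · exact (key d hd).mono fun n h _ => h
  have hcons : ∀ᶠ n in atTop, dhat n = dt := by
    filter_upwards [hall] with n h
    by_contra hne
    exact absurd (hdhat n dt) (not_le.mpr (h _ hne))
  -- Part B
  set S : Finset (Fin m) := Finset.univ.filter (fun i => dt i = false) with hSdef
  have hScard : 0 < S.card := Finset.card_pos.mpr hdt
  have hcardR : (0:ℝ) < (S.card : ℝ) := by exact_mod_cast hScard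
  have hsum_pos : ∀ n, 0 < ∑ i ∈ S, v n i :=
    fun n => Finset.sum_pos (fun i _ => (hv n i).1) hdt
  obtain ⟨i0, hi0S, hi0⟩ := Finset.exists_mem_eq_inf' hdt Ht
  have hi0f : dt i0 = false := by
    have := (Finset.mem_filter.mp (by rwa [hSdef] at hi0S)).2
    simpa using this
  have hmain : Tendsto (fun n : ℕ => Real.log (∑ i ∈ S, v n i) / n) atTop
      (nhds (-(S.inf' hdt Ht))) := by
    refine tendsto_order.2 ⟨fun a ha => ?_, fun a ha => ?_⟩
    · have h2 : Tendsto (fun n : ℕ => Real.log (v n i0) / n) atTop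
          (nhds (-(S.inf' hdt Ht))) := by
        rw [hi0]; exact (hHt i0 hi0f).2
      filter_upwards [h2.eventually_const_lt ha, eventually_ge_atTop 1] with n h1 hn1
      have hn0 : (0:ℝ) < n := by exact_mod_cast hn1
      refine h1.trans_le ?_
      have hle : Real.log (v n i0) ≤ Real.log (∑ i ∈ S, v n i) :=
        Real.log_le_log (hv n i0).1
          (Finset.single_le_sum (fun i _ => (hv n i).1.le) hi0S)
      exact (div_le_div_iff_of_pos_right hn0).2 hle
    · set b : ℝ := (-(S.inf' hdt Ht) + a) / 2 with hbdef
      have hb1 : -(S.inf' hdt Ht) < b := by rw [hbdef]; linarith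
      have hb2 : b < a := by rw [hbdef]; linarith
      have hub : ∀ᶠ n : ℕ in atTop, ∀ i, i ∈ S → Real.log (v n i) / n < b :=
        eventually_all.2 fun i => by
          by_cases hiS : i ∈ S
          · have hif : dt i = false := by
              have := (Finset.mem_filter.mp (by rwa [hSdef] at hiS)).2
              simpa using this
            have hle : -(Ht i) ≤ -(S.inf' hdt Ht) :=
              neg_le_neg (Finset.inf'_le Ht hiS)
            exact (((hHt i hif).2).eventually_lt_const
              (lt_of_le_of_lt hle hb1)).mono fun n h _ => h
          · exact Eventually.of_forall fun n h => absurd h hiS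
      have hz : Tendsto (fun n : ℕ => Real.log (S.card : ℝ) / n) atTop (nhds 0) :=
        tendsto_const_div_atTop_nhds_zero_nat _
      filter_upwards [hub, hz.eventually_lt_const (by linarith : (0:ℝ) < a - b),
        eventually_ge_atTop 1] with n h1 h2 hn1
      have hn0 : (0:ℝ) < n := by exact_mod_cast hn1
      have hsle : (∑ i ∈ S, v n i) ≤ (S.card : ℝ) * Real.exp (n * b) := by
        calc (∑ i ∈ S, v n i) ≤ S.card • Real.exp ((n:ℝ) * b) :=
            Finset.sum_le_card_nsmul _ _ _ (fun i hi => by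
              have hvi := h1 i hi
              have hlog : Real.log (v n i) < (n:ℝ) * b := by
                rw [div_lt_iff₀ hn0] at hvi
                rw [mul_comm]; exact hvi
              calc v n i = Real.exp (Real.log (v n i)) :=
                    (Real.exp_log (hv n i).1).symm
                _ ≤ Real.exp ((n:ℝ) * b) := Real.exp_le_exp.2 hlog.le)
          _ = _ := by rw [nsmul_eq_mul]
      have hlogs : Real.log (∑ i ∈ S, v n i) ≤ Real.log (S.card : ℝ) + n * b := by
        have h := Real.log_le_log (hsum_pos n) hsle
        rwa [Real.log_mul (ne_of_gt hcardR) (Real.exp_ne_zero _), Real.log_exp] at h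
      have hfin : Real.log (∑ i ∈ S, v n i) / n ≤ Real.log (S.card : ℝ) / n + b := by
        rw [div_add' _ _ _ (ne_of_gt hn0)]
        exact (div_le_div_iff_of_pos_right hn0).2 (by linarith)
      linarith
  have hz : Tendsto (fun n : ℕ => Real.log (S.card : ℝ) / n) atTop (nhds 0) :=
    tendsto_const_div_atTop_nhds_zero_nat _
  have htot : Tendsto (fun n : ℕ =>
      Real.log (∑ i ∈ S, v n i) / n - Real.log (S.card : ℝ) / n) atTop
      (nhds (-(S.inf' hdt Ht))) := by
    simpa using hmain.sub hz
  refine htot.congr' ?_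
  filter_upwards [hcons] with n hdn
  have e1 : (∑ i, if dhat n i then 0 else v n i) = ∑ i ∈ S, v n i := by
    rw [hdn, hSdef, Finset.sum_filter]
    exact Finset.sum_congr rfl fun i _ => by cases h : dt i <;> simp [h]
  have e2 : (∑ i, if dhat n i then 0 else (1:ℝ)) = (S.card : ℝ) := by
    rw [hdn, hSdef, Finset.card_filter]
    push_cast
    exact Finset.sum_congr rfl fun i _ => by cases h : dt i <;> simp [h]
  have e3 : max ((S.card : ℝ)) 1 = (S.card : ℝ) :=
    max_eq_left (by exact_mod_cast hScard)
  rw [e1, e2, e3, Real.log_div (ne_of_gt (hsum_pos n)) (ne_of_gt hcardR), sub_div]
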